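/- Let k ≥ 3 be an integer, ρ = -cos(π/k), α = (k-1)π/k, F = [[0,-1],[-1,0]], and Q the whitening matrix for ρ. Then for every integer j, Q⁻¹ F R(jα) Q = (1/sin(π/k)) · [[sin(jα), sin(jα - π/k)], [-sin(jα + π/k), -sin(jα)]]. -/

import Mathlib

open Matrix Real

set_option maxHeartbeats 1000000 in
theorem aux_rot (s c q sx cx : ℝ) (hspos : 0 < s)
    (hpyth : s^2 + c^2 = 1) (hq2 : q^2 * (2 * s^2 * (1 - s)) = 1) :
    ((s * q) • !![-c, 1 - s; 1 - s, -c] * !![0, -1; -1, 0] *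
        !![cx, sx; -sx, cx] * (q • !![-c, s - 1; s - 1, -c]))
      = (1 / s) • !![sx, sx * c - cx * s; -(sx * c + cx * s), -sx] := by
  ext i j
  fin_cases i <;> fin_cases j <;>
    simp [Matrix.mul_apply, Fin.sum_univ_succ] <;> field_simp
  · linear_combination sx*hq2 + s^2*q^2*sx*hpyth
  · linear_combination (c*sx - s*cx)*hq2 - s^2*q^2*cx*hpyth
  · linear_combination (-c*sx - s*cx)*hq2 - s^2*q^2*cx*hpyth
  · linear_combination -sx*hq2 - s^2*q^2*sx*hpyth

set_option maxHeartbeats 1000000 in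
theorem image_rotation_odd (k : ℕ) (hk : 3 ≤ k)
    (ρ : ℝ) (hρ : ρ = -Real.cos (Real.pi / k))
    (α : ℝ) (hα : α = (k - 1) * Real.pi / k)
    (q : ℝ) (hq : q = Real.sign ρ / Real.sqrt (2 * (1 - ρ^2) * (1 - Real.sqrt (1 - ρ^2))))
    (Q : Matrix (Fin 2) (Fin 2) ℝ)
    (hQ : Q = q • !![ρ, Real.sqrt (1 - ρ^2) - 1; Real.sqrt (1 - ρ^2) - 1, ρ]) :
    ∀ j : ℤ,
      Q⁻¹ * !![0, -1; -1, 0] *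
        !![Real.cos (j * α), Real.sin (j * α); -Real.sin (j * α), Real.cos (j * α)] * Q
      = (1 / Real.sin (Real.pi / k)) •
        !![Real.sin (j * α), Real.sin (j * α - Real.pi / k);
           -Real.sin (j * α + Real.pi / k), -Real.sin (j * α)] := by
  intro j
  set s := Real.sin (Real.pi / k) with hs
  set c := Real.cos (Real.pi / k) with hc
  have hkR : (3:ℝ) ≤ (k:ℝ) := by exact_mod_cast hk
  have hpk1 : 0 < Real.pi / k := by positivity
  have hpk2 : Real.pi / k < Real.pi / 2 := by
    rw [div_lt_div_iff₀ (by linarith) (by norm_num)]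
    nlinarith [Real.pi_pos]
  have hspos : 0 < s := Real.sin_pos_of_pos_of_lt_pi hpk1 (by linarith [Real.pi_pos])
  have hcpos : 0 < c := Real.cos_pos_of_mem_Ioo ⟨by linarith, hpk2⟩
  have hpyth : s^2 + c^2 = 1 := Real.sin_sq_add_cos_sq _
  have hs1 : s < 1 := by nlinarith
  have hρ2 : 1 - ρ^2 = s^2 := by rw [hρ]; nlinarith
  have hsqrt : Real.sqrt (1 - ρ^2) = s := by rw [hρ2]; exact Real.sqrt_sq hspos.le
  have hsign : Real.sign ρ = -1 := Real.sign_of_neg (by rw [hρ]; linarith)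
  have hDpos : (0:ℝ) < 2 * s^2 * (1 - s) :=
    mul_pos (by positivity) (by linarith)
  have hq2 : q^2 * (2 * s^2 * (1 - s)) = 1 := by
    rw [hq, hsign, hsqrt, hρ2, div_pow, Real.sq_sqrt hDpos.le, neg_one_sq]
    field_simp
    exact div_self (ne_of_gt (by linarith))
  have hQ' : Q = q • !![-c, s - 1; s - 1, -c] := by rw [hQ, hsqrt, hρ]
  have hQinv : Q⁻¹ = (s * q) • !![-c, 1 - s; 1 - s, -c] := by
    apply Matrix.inv_eq_right_inv
    rw [hQ']
    ext i j
    fin_cases i <;> fin_cases j <;>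
      simp [Matrix.mul_apply, Fin.sum_univ_succ] <;>
      first
        | ring1
        | linear_combination hq2 + s*q^2*hpyth
  rw [hQinv, hQ', Real.sin_sub, Real.sin_add]
  exact aux_rot s c q (Real.sin (j * α)) (Real.cos (j * α)) hspos hpyth hq2
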